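/- Let L ≥ 2 be an integer, A ∈ ℝ^{M×N}, y ∈ ℝ^M, and let x : [0,∞) → ℝ^N be differentiable, satisfy the reduced gradient flow x'(t) = −[Aᵀ(A x(t)^{⊙L} − y)] ⊙ x(t)^{⊙(L−1)} for all t ≥ 0, and have x(t) entrywise strictly positive. Write x̃(t) := x(t)^{⊙L}, fix z₊ ∈ S₊, let y₊ := A z₊, and set C := D_F(z₊, x̃(0)) where F, D_F are as defined below. Then for every T > 0 there exists t ∈ [0,T] with ‖A x̃(t) − y₊‖₂² ≤ 2C/T. -/

import Mathlib

open Filter Topology Matrix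

noncomputable section

/-- The NNLS solution set `S₊ = argmin_{z ≥ 0} ‖Az − y‖₂²`. -/
def nnlsSet {M N : ℕ} (A : Matrix (Fin M) (Fin N) ℝ) (y : Fin M → ℝ) :
    Set (Fin N → ℝ) :=
  {z | (∀ i, 0 ≤ z i) ∧ ∀ w : Fin N → ℝ, (∀ i, 0 ≤ w i) →
    ∑ j, (A.mulVec z j - y j) ^ 2 ≤ ∑ j, (A.mulVec w j - y j) ^ 2}

/-- The reduced gradient flow `x'(t) = −[Aᵀ(A x(t)^{⊙L} − y)] ⊙ x(t)^{⊙(L−1)}` for `t ≥ 0`. -/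
def GradFlow {M N : ℕ} (A : Matrix (Fin M) (Fin N) ℝ) (y : Fin M → ℝ) (L : ℕ)
    (x : ℝ → Fin N → ℝ) : Prop :=
  ∀ t : ℝ, 0 ≤ t → ∀ i : Fin N,
    HasDerivAt (fun s => x s i)
      (-(Matrix.mulVec Aᵀ (A.mulVec (fun j => x t j ^ L) - y) i * x t i ^ (L - 1))) t

/-- The Bregman potential `F`: for `L = 2`, `F(x) = ½ Σₙ (xₙ log xₙ − xₙ)` (with `0·log 0 = 0`,
which holds automatically since `Real.log 0 = 0`); for `L > 2`,
`F(x) = (L/(2(2−L))) Σₙ xₙ^{2/L}`. -/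
def bregF {N : ℕ} (L : ℕ) (x : Fin N → ℝ) : ℝ :=
  if L = 2 then (1 / 2) * ∑ n, (x n * Real.log (x n) - x n)
  else ((L : ℝ) / (2 * (2 - (L : ℝ)))) * ∑ n, x n ^ ((2 : ℝ) / (L : ℝ))

/-- The gradient of `F` on the positive orthant:
`∇F(q)ₙ = ½ log qₙ` if `L = 2` and `∇F(q)ₙ = qₙ^{(2−L)/L}/(2−L)` if `L > 2`. -/
def bregGradF {N : ℕ} (L : ℕ) (q : Fin N → ℝ) : Fin N → ℝ :=
  fun n => if L = 2 then (1 / 2) * Real.log (q n)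
  else q n ^ (((2 : ℝ) - (L : ℝ)) / (L : ℝ)) / (2 - (L : ℝ))

/-- The Bregman divergence `D_F(p,q) = F(p) − F(q) − ⟨∇F(q), p − q⟩`. -/
def bregD {N : ℕ} (L : ℕ) (p q : Fin N → ℝ) : ℝ :=
  bregF L p - bregF L q - ∑ n, bregGradF L q n * (p n - q n)


/-- entropy inequality -/
lemma entropy_ineq {p q : ℝ} (hp : 0 ≤ p) (hq : 0 < q) :
    0 ≤ p * Real.log p - p * Real.log q - p + q := by
  rcases eq_or_lt_of_le hp with h | h
  · simp [← h]; positivity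
  · have h1 := Real.add_one_le_exp (Real.log q - Real.log p)
    rw [Real.exp_sub, Real.exp_log hq, Real.exp_log h] at h1
    have h2 : p * (Real.log q - Real.log p + 1) ≤ p * (q / p) := by
      exact mul_le_mul_of_nonneg_left h1 hp
    rw [mul_div_cancel₀ _ (ne_of_gt h)] at h2
    nlinarith

/-- tangent line inequality for concave rpow -/
lemma rpow_tangent {p q α : ℝ} (hp : 0 ≤ p) (hq : 0 < q) (hα0 : 0 ≤ α) (hα1 : α ≤ 1) :
    p ^ α ≤ q ^ α + α * q ^ (α - 1) * (p - q) := by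
  have hs : (-1 : ℝ) ≤ p / q - 1 := by
    have : 0 ≤ p / q := div_nonneg hp hq.le
    linarith
  have h := rpow_one_add_le_one_add_mul_self hs hα0 hα1
  have h1 : (1 + (p / q - 1)) = p / q := by ring
  rw [h1] at h
  have h2 : (p / q) ^ α * q ^ α ≤ (1 + α * (p / q - 1)) * q ^ α :=
    mul_le_mul_of_nonneg_right h (Real.rpow_nonneg hq.le α)
  rw [← Real.mul_rpow (div_nonneg hp hq.le) hq.le, div_mul_cancel₀ _ (ne_of_gt hq)] at h2
  have h3 : q ^ (α - 1) = q ^ α / q := by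
    rw [Real.rpow_sub hq, Real.rpow_one]
  calc p ^ α ≤ (1 + α * (p / q - 1)) * q ^ α := h2
    _ = q ^ α + α * q ^ (α - 1) * (p - q) := by
        rw [h3]; field_simp

def phiT (L : ℕ) (qn : ℝ) : ℝ :=
  if L = 2 then (1/2) * (qn * Real.log qn - qn)
  else ((L : ℝ) / (2 * (2 - (L : ℝ)))) * qn ^ ((2 : ℝ) / (L : ℝ))

def psiT (L : ℕ) (qn : ℝ) : ℝ :=
  if L = 2 then (1/2) * Real.log qn
  else qn ^ (((2 : ℝ) - (L : ℝ)) / (L : ℝ)) / (2 - (L : ℝ))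

def Eterm (L : ℕ) (pn qn : ℝ) : ℝ := phiT L qn + psiT L qn * (pn - qn)

lemma bregF_eq {N : ℕ} (L : ℕ) (x : Fin N → ℝ) : bregF L x = ∑ n, phiT L (x n) := by
  unfold bregF phiT
  by_cases h : L = 2 <;> simp [h, Finset.mul_sum, Finset.sum_sub_distrib, mul_sub]

lemma bregD_eq {N : ℕ} (L : ℕ) (p q : Fin N → ℝ) :
    bregD L p q = ∑ n, (phiT L (p n) - Eterm L (p n) (q n)) := by
  unfold bregD Eterm
  rw [bregF_eq, bregF_eq]
  unfold bregGradF psiT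
  simp only [Finset.sum_sub_distrib, Finset.sum_add_distrib]
  ring

lemma Eterm_le {L : ℕ} (hL : 2 ≤ L) {pn qn : ℝ} (hp : 0 ≤ pn) (hq : 0 < qn) :
    Eterm L pn qn ≤ phiT L pn := by
  unfold Eterm phiT psiT
  rcases eq_or_lt_of_le hL with h2 | h3
  · subst h2
    norm_num
    have := entropy_ineq hp hq
    nlinarith [this]
  · have hL2 : L ≠ 2 := by omega
    simp only [if_neg hL2]
    have hLpos : (0:ℝ) < (L:ℝ) := by positivity
    have hL2R : (2:ℝ) - (L:ℝ) < 0 := by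
      have : (3:ℝ) ≤ (L:ℝ) := by exact_mod_cast h3
      linarith
    set α : ℝ := (2:ℝ) / (L:ℝ) with hα
    have hα0 : 0 ≤ α := by positivity
    have hα1 : α ≤ 1 := by
      rw [hα, div_le_one hLpos]
      exact_mod_cast hL
    have htan := rpow_tangent hp hq hα0 hα1
    have hexp : ((2:ℝ) - (L:ℝ)) / (L:ℝ) = α - 1 := by
      rw [hα]; field_simp
    rw [hexp]
    have hc : (L : ℝ) / (2 * (2 - (L:ℝ))) < 0 := by
      apply div_neg_of_pos_of_neg hLpos
      linarith
    have hne2 : (2 - (L:ℝ)) ≠ 0 := ne_of_lt hL2R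
    have hne1 : 2 * (2 - (L:ℝ)) * (L:ℝ) ≠ 0 := by
      apply ne_of_lt; nlinarith
    have hcα : (L : ℝ) / (2 * (2 - (L:ℝ))) * α = 1 / (2 - (L:ℝ)) := by
      rw [hα, div_mul_div_comm, div_eq_div_iff hne1 hne2]
      ring
    have key : qn ^ (α - 1) / (2 - (L:ℝ)) = (L : ℝ) / (2 * (2 - (L:ℝ))) * α * qn ^ (α-1) := by
      rw [hcα]; ring
    rw [key]
    nlinarith [htan, hc]


lemma bregD_nonneg {N : ℕ} {L : ℕ} (hL : 2 ≤ L) (p q : Fin N → ℝ)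
    (hp : ∀ n, 0 ≤ p n) (hq : ∀ n, 0 < q n) : 0 ≤ bregD L p q := by
  rw [bregD_eq]
  exact Finset.sum_nonneg fun n _ => sub_nonneg.2 (Eterm_le hL (hp n) (hq n))

lemma hasDerivAt_Eterm {L : ℕ} (hL : 2 ≤ L) (pn : ℝ) {u : ℝ → ℝ} {t vn : ℝ}
    (hu : 0 < u t) (hud : HasDerivAt u (-(vn * u t ^ (L - 1))) t) :
    HasDerivAt (fun s => Eterm L pn (u s ^ L)) (-(vn * (pn - u t ^ L))) t := by
  have hq : HasDerivAt (fun s => u s ^ L)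
      ((L : ℝ) * u t ^ (L - 1) * -(vn * u t ^ (L - 1))) t := hud.pow L
  have hQpos : 0 < u t ^ L := pow_pos hu L
  have hQne : u t ^ L ≠ 0 := ne_of_gt hQpos
  rcases eq_or_lt_of_le hL with h2 | h3
  · -- L = 2
    subst h2
    have hlog : HasDerivAt (fun s => Real.log (u s ^ 2))
        (((2 : ℝ) * u t ^ (2 - 1) * -(vn * u t ^ (2 - 1))) / u t ^ 2) t := hq.log hQne
    have hphi : HasDerivAt (fun s => phiT 2 (u s ^ 2))
        ((1/2) * ((((2:ℝ) * u t ^ (2-1) * -(vn * u t ^ (2-1))) * Real.log (u t ^ 2)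
          + u t ^ 2 * ((((2:ℝ) * u t ^ (2-1) * -(vn * u t ^ (2-1)))) / u t ^ 2))
          - ((2:ℝ) * u t ^ (2-1) * -(vn * u t ^ (2-1))))) t := by
      exact ((hq.mul hlog).sub hq).const_mul (1/2 : ℝ)
    have hpsi : HasDerivAt (fun s => psiT 2 (u s ^ 2) * (pn - u s ^ 2))
        (((1/2) * ((((2:ℝ) * u t ^ (2-1) * -(vn * u t ^ (2-1)))) / u t ^ 2)) * (pn - u t ^ 2)
          + ((1/2) * Real.log (u t ^ 2)) * (-(((2:ℝ) * u t ^ (2-1) * -(vn * u t ^ (2-1)))))) t := by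
      exact (hlog.const_mul (1/2 : ℝ)).mul (hq.const_sub pn)
    have := hphi.add hpsi
    refine this.congr_deriv (Eq.symm ?_)
    have hune : u t ≠ 0 := ne_of_gt hu
    field_simp
    try ring
  · -- L ≥ 3
    have hL2 : L ≠ 2 := by omega
    obtain ⟨m, rfl⟩ : ∃ m, L = m + 3 := ⟨L - 3, by omega⟩
    set L' : ℕ := m + 3 with hL'
    have hLpos : (0:ℝ) < (L' : ℝ) := by positivity
    have hLne : (L' : ℝ) ≠ 0 := ne_of_gt hLpos
    have h2L : (2:ℝ) - (L' : ℝ) ≠ 0 := by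
      have : (3:ℝ) ≤ (L':ℝ) := by exact_mod_cast (by omega : 3 ≤ L')
      linarith
    set α : ℝ := (2:ℝ) / (L':ℝ) with hα
    set β : ℝ := ((2:ℝ) - (L':ℝ)) / (L':ℝ) with hβ
    set q' : ℝ := (L' : ℝ) * u t ^ (L' - 1) * -(vn * u t ^ (L' - 1)) with hq'
    have hrpowα : HasDerivAt (fun s => (u s ^ L') ^ α)
        (q' * α * (u t ^ L') ^ (α - 1)) t := hq.rpow_const (Or.inl hQne)
    have hrpowβ : HasDerivAt (fun s => (u s ^ L') ^ β)
        (q' * β * (u t ^ L') ^ (β - 1)) t := hq.rpow_const (Or.inl hQne)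
    have hphi : HasDerivAt (fun s => phiT L' (u s ^ L'))
        (((L':ℝ) / (2 * (2 - (L':ℝ)))) * (q' * α * (u t ^ L') ^ (α - 1))) t := by
      exact hrpowα.const_mul ((L':ℝ) / (2 * (2 - (L':ℝ))))
    have hpsi : HasDerivAt (fun s => psiT L' (u s ^ L') * (pn - u s ^ L'))
        ((q' * β * (u t ^ L') ^ (β - 1) / (2 - (L':ℝ))) * (pn - u t ^ L')
          + ((u t ^ L') ^ β / (2 - (L':ℝ))) * (-q')) t := by
      exact (hrpowβ.div_const (2 - (L':ℝ))).mul (hq.const_sub pn)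
    have := hphi.add hpsi
    refine this.congr_deriv (Eq.symm ?_)
    · -- arithmetic identity
      have hune : u t ≠ 0 := ne_of_gt hu
      have e1 : (u t ^ L') ^ (α - 1) = u t ^ 2 / u t ^ L' := by
        rw [← Real.rpow_natCast (u t) L', ← Real.rpow_mul hu.le]
        have : (L':ℝ) * (α - 1) = 2 - (L':ℝ) := by rw [hα]; field_simp
        rw [this, Real.rpow_sub hu]
        norm_num [Real.rpow_natCast]
      have e2 : (u t ^ L') ^ β = u t ^ 2 / u t ^ L' := by
        rw [← Real.rpow_natCast (u t) L', ← Real.rpow_mul hu.le]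
        have : (L':ℝ) * β = 2 - (L':ℝ) := by rw [hβ]; field_simp
        rw [this, Real.rpow_sub hu]
        norm_num [Real.rpow_natCast]
      have e3 : (u t ^ L') ^ (β - 1) = u t ^ 2 / (u t ^ L' * u t ^ L') := by
        rw [← Real.rpow_natCast (u t) L', ← Real.rpow_mul hu.le]
        have h4 : (L':ℝ) * (β - 1) = 2 - (L':ℝ) - (L':ℝ) := by rw [hβ]; field_simp; try ring
        rw [h4, Real.rpow_sub hu, Real.rpow_sub hu]
        norm_num [Real.rpow_natCast]
        ring
      rw [e1, e2, e3, hq', hα, hβ]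
      have hL1 : L' - 1 = m + 2 := by omega
      have hcast : ((L':ℕ):ℝ) = (m:ℝ) + 3 := by push_cast [hL']; ring
      rw [hL1, hcast]
      have hupow : u t ^ L' = u t ^ (m+3) := by rw [hL']
      rw [hupow]
      have hm3 : ((m:ℝ) + 3) ≠ 0 := by positivity
      have hne2 : (2:ℝ) - ((m:ℝ) + 3) ≠ 0 := by
        have : (0:ℝ) ≤ (m:ℝ) := Nat.cast_nonneg m
        intro h; nlinarith
      field_simp
      try ring

lemma vi {M N : ℕ} {A : Matrix (Fin M) (Fin N) ℝ} {y : Fin M → ℝ}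
    {zp : Fin N → ℝ} (hzp : zp ∈ nnlsSet A y) (w : Fin N → ℝ) (hw : ∀ i, 0 ≤ w i) :
    ∑ j, (y j - A.mulVec zp j) * (A.mulVec w j - A.mulVec zp j) ≤ 0 := by
  by_contra hcon
  push_neg at hcon
  set b : Fin M → ℝ := fun j => A.mulVec w j - A.mulVec zp j with hb
  set s : ℝ := ∑ j, (A.mulVec zp j - y j) * b j with hs
  have hslt : s < 0 := by
    rw [hs]
    have : ∑ j, (A.mulVec zp j - y j) * b j = -∑ j, (y j - A.mulVec zp j) * b j := by
      rw [← Finset.sum_neg_distrib]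
      exact Finset.sum_congr rfl fun j _ => by ring
    rw [this]
    linarith
  set c : ℝ := ∑ j, (b j) ^ 2 with hc
  have hc0 : 0 ≤ c := Finset.sum_nonneg fun j _ => sq_nonneg _
  set θ : ℝ := min 1 (-s / (c + 1)) with hθ
  have hθpos : 0 < θ := lt_min one_pos (div_pos (by linarith) (by linarith))
  have hθ1 : θ ≤ 1 := min_le_left _ _
  have hθ2 : θ ≤ -s / (c + 1) := min_le_right _ _
  set zθ : Fin N → ℝ := fun i => zp i + θ * (w i - zp i) with hzθ
  have hzθ0 : ∀ i, 0 ≤ zθ i := by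
    intro i
    have : zθ i = (1 - θ) * zp i + θ * w i := by rw [hzθ]; ring
    rw [this]
    have := hzp.1 i
    have := hw i
    nlinarith
  have hmv : ∀ j, A.mulVec zθ j = A.mulVec zp j + θ * b j := by
    intro j
    have hzθ' : zθ = zp + θ • (w - zp) := by
      funext i; simp [hzθ, smul_eq_mul]
    rw [hzθ', Matrix.mulVec_add, Matrix.mulVec_smul, Matrix.mulVec_sub]
    simp [hb, smul_eq_mul]
  have hopt := hzp.2 zθ hzθ0
  have hexp : ∑ j, (A.mulVec zθ j - y j) ^ 2
      = ∑ j, (A.mulVec zp j - y j) ^ 2 + (2 * θ * s + θ ^ 2 * c) := by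
    have : ∀ j, (A.mulVec zθ j - y j) ^ 2
        = (A.mulVec zp j - y j) ^ 2 + (2 * θ * ((A.mulVec zp j - y j) * b j) + θ^2 * (b j)^2) := by
      intro j; rw [hmv j]; ring
    rw [Finset.sum_congr rfl fun j _ => this j, Finset.sum_add_distrib,
      Finset.sum_add_distrib, ← Finset.mul_sum, ← Finset.mul_sum, hs, hc]
  rw [hexp] at hopt
  have h1 : 0 ≤ 2 * θ * s + θ ^ 2 * c := by linarith
  have h2 : θ * c ≤ -s := by
    have h3 : θ * (c + 1) ≤ -s := by
      calc θ * (c + 1) ≤ (-s / (c + 1)) * (c + 1) := by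
            apply mul_le_mul_of_nonneg_right hθ2; linarith
        _ = -s := by field_simp
    nlinarith
  nlinarith

lemma dd_eq {M N : ℕ} (A : Matrix (Fin M) (Fin N) ℝ) (w : Fin M → ℝ) (zp q : Fin N → ℝ) :
    ∑ n, Matrix.mulVec Aᵀ w n * (zp n - q n) = ∑ j, w j * (A.mulVec zp j - A.mulVec q j) := by
  have h1 : ∑ n, Matrix.mulVec Aᵀ w n * (zp n - q n) = Matrix.mulVec Aᵀ w ⬝ᵥ (zp - q) := by
    simp [dotProduct]
  rw [h1, Matrix.mulVec_transpose, ← Matrix.dotProduct_mulVec, Matrix.mulVec_sub]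
  simp [dotProduct]

theorem stmt19 {M N : ℕ} (L : ℕ) (hL : 2 ≤ L)
    (A : Matrix (Fin M) (Fin N) ℝ) (y : Fin M → ℝ)
    (x : ℝ → Fin N → ℝ)
    (hflow : GradFlow A y L x)
    (hpos : ∀ t : ℝ, 0 ≤ t → ∀ i, 0 < x t i)
    (zp : Fin N → ℝ) (hzp : zp ∈ nnlsSet A y)
    (C : ℝ) (hC : C = bregD L zp (fun i => x 0 i ^ L)) :
    ∀ T : ℝ, 0 < T → ∃ t ∈ Set.Icc (0 : ℝ) T,
      ∑ j, (A.mulVec (fun i => x t i ^ L) j - A.mulVec zp j) ^ 2 ≤ 2 * C / T := by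
  intro T hT
  by_contra hcon
  push_neg at hcon
  set h : ℝ → ℝ := fun s => bregD L zp (fun i => x s i ^ L) with hh
  have hC0 : 0 ≤ C := by
    rw [hC]
    exact bregD_nonneg hL zp _ hzp.1 (fun i => pow_pos (hpos 0 le_rfl i) L)
  have hderiv : ∀ t : ℝ, 0 ≤ t → HasDerivAt h
      (∑ n, Matrix.mulVec Aᵀ (A.mulVec (fun j => x t j ^ L) - y) n * (zp n - x t n ^ L)) t := by
    intro t ht
    have hfun : h = fun s => ∑ n, (phiT L (zp n) - Eterm L (zp n) (x s n ^ L)) :=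
      funext fun s => bregD_eq L zp _
    rw [hfun]
    have hsum := HasDerivAt.fun_sum (u := Finset.univ)
      (fun n _ => ((hasDerivAt_Eterm hL (zp n) (hpos t ht n) (hflow t ht n)).const_sub
        (phiT L (zp n))))
    refine hsum.congr_deriv (Eq.symm ?_)
    simp
  have hkey : ∀ t : ℝ, 0 ≤ t →
      (∑ n, Matrix.mulVec Aᵀ (A.mulVec (fun j => x t j ^ L) - y) n * (zp n - x t n ^ L))
      ≤ -∑ j, (A.mulVec (fun i => x t i ^ L) j - A.mulVec zp j) ^ 2 := by
    intro t ht
    set q : Fin N → ℝ := fun i => x t i ^ L with hqdef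
    have hdd := dd_eq A (A.mulVec q - y) zp q
    have hvi := vi hzp q (fun i => (pow_pos (hpos t ht i) L).le)
    have hsplit : ∑ j, (A.mulVec q - y) j * (A.mulVec zp j - A.mulVec q j)
        = -∑ j, (A.mulVec q j - A.mulVec zp j) ^ 2
          + ∑ j, (y j - A.mulVec zp j) * (A.mulVec q j - A.mulVec zp j) := by
      rw [← Finset.sum_neg_distrib, ← Finset.sum_add_distrib]
      exact Finset.sum_congr rfl fun j _ => by simp [Pi.sub_apply]; ring
    rw [hdd, hsplit]
    linarith
  set f : ℝ → ℝ := fun s => h s + (2 * C / T) * s with hf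
  have hfd : ∀ t ∈ Set.Icc (0:ℝ) T, HasDerivAt f
      ((∑ n, Matrix.mulVec Aᵀ (A.mulVec (fun j => x t j ^ L) - y) n * (zp n - x t n ^ L))
        + 2 * C / T) t := by
    intro t ht
    have hid := (hasDerivAt_id t).const_mul (2 * C / T)
    rw [mul_one] at hid
    exact (hderiv t ht.1).add hid
  have hcont : ContinuousOn f (Set.Icc 0 T) :=
    fun t ht => ((hfd t ht).continuousAt.continuousWithinAt)
  have hneg : ∀ t ∈ interior (Set.Icc (0:ℝ) T), deriv f t < 0 := by
    rw [interior_Icc]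
    intro t ht
    have hmem : t ∈ Set.Icc (0:ℝ) T := ⟨ht.1.le, ht.2.le⟩
    rw [(hfd t hmem).deriv]
    have h1 := hkey t ht.1.le
    have h2 := hcon t hmem
    linarith
  have hanti := strictAntiOn_of_deriv_neg (convex_Icc 0 T) hcont hneg
  have hlt := hanti (Set.left_mem_Icc.2 hT.le) (Set.right_mem_Icc.2 hT.le) hT
  have hf0 : f 0 = C := by
    simp only [hf, hh, mul_zero, add_zero]
    exact hC.symm
  have hfT : f T = h T + 2 * C := by
    simp only [hf]
    rw [div_mul_cancel₀ _ (ne_of_gt hT)]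
  have hhT : 0 ≤ h T :=
    bregD_nonneg hL zp _ hzp.1 (fun i => pow_pos (hpos T hT.le i) L)
  rw [hf0, hfT] at hlt
  linarith
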